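/- Let Σ be a k×k symmetric positive definite matrix, μ̃ ∈ R^k, and A = Σ + μ̃μ̃′. Define R_GMV = (1′Σ⁻¹μ̃ − 1′Σ⁻¹1)/(1′Σ⁻¹1) written for μ = μ̃ − 1 as R_GMV = 1′Σ⁻¹μ/(1′Σ⁻¹1), V_GMV = 1/(1′Σ⁻¹1), and s = μ′Qμ with Q = Σ⁻¹ − (Σ⁻¹11′Σ⁻¹)/(1′Σ⁻¹1). Then 1′A⁻¹μ̃ = (1 + R_GMV) / ((1 + R_GMV)² + (1 + s) V_GMV). -/

import Mathlib

open Matrix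

section Aux
variable {k : ℕ}

lemma vmv_mulVec (u v w : Fin k → ℝ) : vecMulVec u v *ᵥ w = (v ⬝ᵥ w) • u := by
  ext i
  simp only [vecMulVec_apply, mulVec, dotProduct, Pi.smul_apply, smul_eq_mul, Finset.sum_mul]
  exact Finset.sum_congr rfl fun x _ => by ring

lemma mul_vmv (M : Matrix (Fin k) (Fin k) ℝ) (u v : Fin k → ℝ) :
    M * vecMulVec u v = vecMulVec (M *ᵥ u) v := by
  ext i j; simp [vecMulVec_apply, mul_apply, mulVec, dotProduct, Finset.sum_mul, mul_assoc]

lemma vmv_mul (M : Matrix (Fin k) (Fin k) ℝ) (hM : Mᵀ = M) (u v : Fin k → ℝ) :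
    vecMulVec u v * M = vecMulVec u (M *ᵥ v) := by
  ext i j
  simp only [vecMulVec_apply, mul_apply, mulVec, dotProduct, Finset.mul_sum]
  refine Finset.sum_congr rfl fun x _ => ?_
  have : M x j = M j x := (congrFun (congrFun hM.symm x) j).trans (transpose_apply M x j)
  rw [this]; ring

lemma dot_symm (M : Matrix (Fin k) (Fin k) ℝ) (hM : Mᵀ = M) (u v : Fin k → ℝ) :
    u ⬝ᵥ M *ᵥ v = v ⬝ᵥ M *ᵥ u := by
  conv_lhs => rw [← hM]
  rw [mulVec_transpose, dotProduct_comm, dotProduct_mulVec]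

lemma smul_vmv (x : ℝ) (u v : Fin k → ℝ) :
    vecMulVec (x • u) v = x • vecMulVec u v := by
  ext i j; simp [vecMulVec_apply, mul_assoc]

end Aux

theorem stmt_13 {k : ℕ} (hk : 0 < k) (S : Matrix (Fin k) (Fin k) ℝ)
    (hS : S.PosDef) (μ : Fin k → ℝ) :
    let ones : Fin k → ℝ := fun _ => 1
    let μt : Fin k → ℝ := μ + ones
    let A : Matrix (Fin k) (Fin k) ℝ := S + vecMulVec μt μt
    let Q : Matrix (Fin k) (Fin k) ℝ :=
      S⁻¹ - (ones ⬝ᵥ S⁻¹ *ᵥ ones)⁻¹ • (S⁻¹ * vecMulVec ones ones * S⁻¹)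
    let RGMV : ℝ := (ones ⬝ᵥ S⁻¹ *ᵥ μ) / (ones ⬝ᵥ S⁻¹ *ᵥ ones)
    let VGMV : ℝ := 1 / (ones ⬝ᵥ S⁻¹ *ᵥ ones)
    let s : ℝ := μ ⬝ᵥ Q *ᵥ μ
    ones ⬝ᵥ A⁻¹ *ᵥ μt = (1 + RGMV) / ((1 + RGMV) ^ 2 + (1 + s) * VGMV) := by
  intro ones μt A Q RGMV VGMV s
  have hSi : (S⁻¹)ᵀ = S⁻¹ := by
    have h := hS.inv.isHermitian
    simpa [Matrix.IsHermitian, Matrix.conjTranspose, Matrix.map, Matrix.transpose] using h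
  have hSS : S * S⁻¹ = 1 := mul_nonsing_inv S ((isUnit_iff_isUnit_det S).mp hS.isUnit)
  -- scalars
  set a' : ℝ := ones ⬝ᵥ S⁻¹ *ᵥ μ with ha'
  set b : ℝ := ones ⬝ᵥ S⁻¹ *ᵥ ones with hbdef
  set c' : ℝ := μ ⬝ᵥ S⁻¹ *ᵥ μ with hc'
  set c : ℝ := μt ⬝ᵥ S⁻¹ *ᵥ μt with hcdef
  have hones : ones ≠ 0 := by
    intro h
    have := congrFun h ⟨0, hk⟩
    simp [ones] at this
  have hb : 0 < b := by
    have := hS.inv.re_dotProduct_pos (star_ne_zero.mpr hones)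
    simpa [hbdef] using this
  have hc0 : 0 ≤ c := by
    have := hS.inv.posSemidef.re_dotProduct_nonneg (star μt)
    simpa [hcdef] using this
  have h1c : (1 : ℝ) + c ≠ 0 := by positivity
  have hb0 : b ≠ 0 := hb.ne'
  -- relations among scalars
  have hmus : μ ⬝ᵥ S⁻¹ *ᵥ ones = a' := dot_symm _ hSi μ ones
  have ha : ones ⬝ᵥ S⁻¹ *ᵥ μt = a' + b := by
    simp [μt, mulVec_add, dotProduct_add, ha', hbdef]
  have hc : c = c' + 2 * a' + b := by
    simp only [hcdef, μt, mulVec_add, dotProduct_add, add_dotProduct]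
    rw [hmus]
    simp only [← ha', ← hbdef, ← hc']
    ring
  -- inverse of A via Sherman–Morrison
  set w : Fin k → ℝ := S⁻¹ *ᵥ μt with hw
  have hwc : μt ⬝ᵥ w = c := hcdef.symm
  have hWmat : S⁻¹ * vecMulVec μt μt * S⁻¹ = vecMulVec w w := by
    rw [mul_vmv, vmv_mul _ hSi]
  have hkey : A * (S⁻¹ - (1 + c)⁻¹ • (S⁻¹ * vecMulVec μt μt * S⁻¹)) = 1 := by
    rw [hWmat]
    have hSw : S *ᵥ w = μt := by
      rw [hw, mulVec_mulVec, hSS, one_mulVec]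
    have h1 : S * vecMulVec w w = vecMulVec μt w := by rw [mul_vmv, hSw]
    have h2 : vecMulVec μt μt * S⁻¹ = vecMulVec μt w := vmv_mul _ hSi _ _
    have h3 : vecMulVec μt μt * vecMulVec w w = c • vecMulVec μt w := by
      rw [mul_vmv, vmv_mulVec, hwc, smul_vmv]
    rw [add_mul, mul_sub, mul_sub, Matrix.mul_smul, Matrix.mul_smul, hSS, h1, h2, h3,
      smul_smul]
    have ht : (1 + c)⁻¹ + (1 + c)⁻¹ * c = 1 := by field_simp
    have hsum : ((1 + c)⁻¹ + (1 + c)⁻¹ * c) • vecMulVec μt w = vecMulVec μt w := by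
      rw [ht, one_smul]
    calc 1 - (1 + c)⁻¹ • vecMulVec μt w +
          (vecMulVec μt w - ((1 + c)⁻¹ * c) • vecMulVec μt w)
        = 1 + (vecMulVec μt w -
            ((1 + c)⁻¹ + (1 + c)⁻¹ * c) • vecMulVec μt w) := by
          rw [add_smul]; abel
      _ = 1 := by rw [hsum, sub_self, add_zero]
  have hAinv : A⁻¹ = S⁻¹ - (1 + c)⁻¹ • (S⁻¹ * vecMulVec μt μt * S⁻¹) :=
    inv_eq_right_inv hkey
  -- compute LHS
  have hLHS : ones ⬝ᵥ A⁻¹ *ᵥ μt = (a' + b) * (1 + c)⁻¹ := by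
    rw [hAinv, hWmat, sub_mulVec, dotProduct_sub, smul_mulVec, dotProduct_smul,
      vmv_mulVec, dotProduct_comm w μt, hwc, dotProduct_smul, ← hw, ha, smul_eq_mul, smul_eq_mul]
    field_simp
    ring
  -- compute s
  have hs : s = c' - b⁻¹ * (a' * a') := by
    have hW1 : S⁻¹ * vecMulVec ones ones * S⁻¹ = vecMulVec (S⁻¹ *ᵥ ones) (S⁻¹ *ᵥ ones) := by
      rw [mul_vmv, vmv_mul _ hSi]
    have : μ ⬝ᵥ vecMulVec (S⁻¹ *ᵥ ones) (S⁻¹ *ᵥ ones) *ᵥ μ = a' * a' := by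
      rw [vmv_mulVec, dotProduct_smul]
      rw [show (S⁻¹ *ᵥ ones) ⬝ᵥ μ = a' by rw [dotProduct_comm, hmus],
        show μ ⬝ᵥ S⁻¹ *ᵥ ones = a' from hmus, smul_eq_mul]
    simp only [s, Q, sub_mulVec, dotProduct_sub, smul_mulVec, dotProduct_smul, hW1, this,
      ← hc', ← hbdef, smul_eq_mul]
  -- finish
  rw [hLHS]
  show (a' + b) * (1 + c)⁻¹ = (1 + a' / b) / ((1 + a' / b) ^ 2 + (1 + s) * (1 / b))
  have hD : (1 + a' / b) ^ 2 + (1 + (c' - b⁻¹ * (a' * a'))) * (1 / b) = (1 + c) / b := by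
    rw [hc]; field_simp; ring
  rw [hs, hD, div_div_eq_mul_div]
  rw [eq_div_iff h1c]
  field_simp
  ring
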